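/- (Budur.) Let m = (m₁,…,m_r) ∈ ℕ^r be such that f₁^{m₁}⋯f_r^{m_r} is nonconstant. Then Exp(Z(B_F^m)) = ⋃_i Exp(Z(B_F^{e_i})), where the union is over all indices 1 ≤ i ≤ r with m_i ≠ 0 and f_i nonconstant, and e_i ∈ ℕ^r is the i-th standard basis vector. -/

import Mathlib

set_option synthInstance.maxHeartbeats 1000000
set_option maxHeartbeats 2000000
noncomputable section
open MvPolynomial

/-! ## The ring `R = ℂ[x₁,…,xₙ]`, its localization `R_f`, and the extension of `∂/∂xᵢ`
to `R_f` (constructed via the universal property of the localization, using dual numbers;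
this is the unique extension, given by the quotient rule). -/

variable {n r : ℕ}

/-- The ring homomorphism `R → R_f[ε]`, `a ↦ a + (∂a/∂xᵢ)ε`. -/
def BSpsi (f : MvPolynomial (Fin n) ℂ) (i : Fin n) :
    MvPolynomial (Fin n) ℂ →+* TrivSqZeroExt (Localization.Away f) (Localization.Away f) where
  toFun a := ⟨algebraMap _ _ a, algebraMap _ _ (pderiv i a)⟩
  map_one' := by
    refine TrivSqZeroExt.ext ?_ ?_ <;> simp
  map_mul' a b := by
    refine TrivSqZeroExt.ext ?_ ?_
    · exact (map_mul _ _ _)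
    · change algebraMap _ _ (pderiv i (a * b)) = algebraMap _ _ a • algebraMap _ _ (pderiv i b)
        + MulOpposite.op (algebraMap _ _ b) • algebraMap _ _ (pderiv i a)
      rw [pderiv_mul, map_add, map_mul, map_mul]
      simp [smul_eq_mul, MulOpposite.smul_eq_mul_unop]
      ring
  map_zero' := by
    refine TrivSqZeroExt.ext ?_ ?_ <;> simp
  map_add' a b := by
    refine TrivSqZeroExt.ext ?_ ?_
    · exact map_add (algebraMap (MvPolynomial (Fin n) ℂ) (Localization.Away f)) a b
    · change algebraMap _ _ (pderiv i (a + b)) = algebraMap _ _ (pderiv i a)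
        + algebraMap (MvPolynomial (Fin n) ℂ) (Localization.Away f) (pderiv i b)
      simp

lemma BSpsi_isUnit (f : MvPolynomial (Fin n) ℂ) (i : Fin n) : IsUnit (BSpsi f i f) := by
  rw [TrivSqZeroExt.isUnit_iff_isUnit_fst]
  exact IsLocalization.Away.algebraMap_isUnit f

/-- The lift of `BSpsi` to the localization `R_f → R_f[ε]`. -/
def BSPhi (f : MvPolynomial (Fin n) ℂ) (i : Fin n) :
    Localization.Away f →+* TrivSqZeroExt (Localization.Away f) (Localization.Away f) :=
  IsLocalization.Away.lift f (BSpsi_isUnit f i)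

lemma BSPhi_algebraMap (f : MvPolynomial (Fin n) ℂ) (i : Fin n) (a : MvPolynomial (Fin n) ℂ) :
    BSPhi f i (algebraMap _ _ a) = BSpsi f i a :=
  IsLocalization.lift_eq _ _

/-- The extension of `∂/∂xᵢ` to the localization `R_f = ℂ[x₁,…,xₙ][1/f]`
(the unique extension, given by the quotient rule), as a `ℂ`-linear endomorphism. -/
def BSderiv (f : MvPolynomial (Fin n) ℂ) (i : Fin n) :
    Module.End ℂ (Localization.Away f) where
  toFun z := (BSPhi f i z).snd
  map_add' x y := by simp
  map_smul' c z := by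
    simp only [RingHom.id_apply]
    rw [show c • z = algebraMap ℂ (Localization.Away f) c * z from Algebra.smul_def c z, map_mul]
    have h1 : algebraMap ℂ (Localization.Away f) c
        = algebraMap (MvPolynomial (Fin n) ℂ) (Localization.Away f) (C c) := by
      rw [IsScalarTower.algebraMap_apply ℂ (MvPolynomial (Fin n) ℂ) (Localization.Away f)]
      simp
    rw [h1, BSPhi_algebraMap]
    rw [TrivSqZeroExt.snd_mul]
    show (algebraMap _ _ (C c)) • _ + (MulOpposite.op (BSPhi f i z).fst)
      • (algebraMap _ _ (pderiv i (C c))) = _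
    simp [Algebra.smul_def, ← h1]

/-! ## The module `M = R_f ⊗_ℂ ℂ[s₁,…,s_r] = R_f[s₁,…,s_r]` and the operators on it. -/

/-- The module `M = R_f ⊗_ℂ ℂ[s₁,…,s_r]`, realized as polynomials in `s₁,…,s_r`
with coefficients in `R_f`. -/
abbrev BSModule (r : ℕ) (f : MvPolynomial (Fin n) ℂ) :=
  MvPolynomial (Fin r) (Localization.Away f)

/-- A `ℂ`-linear endomorphism of `R_f` applied coefficientwise to `M = R_f[s₁,…,s_r]`. -/
def coeffwise (f : MvPolynomial (Fin n) ℂ) (d : Module.End ℂ (Localization.Away f)) :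
    Module.End ℂ (BSModule r f) :=
  (AddMonoidAlgebra.coeffLinearEquiv ℂ).symm.toLinearMap ∘ₗ Finsupp.mapRange.linearMap d
    ∘ₗ (AddMonoidAlgebra.coeffLinearEquiv ℂ).toLinearMap

/-- The element `(∂f_j/∂xᵢ)/f_j` of `R_f`, where `f = f₁⋯f_r`:
it is the fraction with numerator `(∂f_j/∂xᵢ)·∏_{k≠j} f_k` and denominator `f`. -/
def BSdlog (F : Fin r → MvPolynomial (Fin n) ℂ) (i : Fin n) (j : Fin r) :
    Localization.Away (∏ k, F k) :=
  Localization.mk (pderiv i (F j) * ∏ k ∈ Finset.univ.erase j, F k)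
    ⟨∏ k, F k, Submonoid.mem_powers _⟩

/-- The operator `∇ᵢ` on `M = R_f[s₁,…,s_r]`, given by
`∇ᵢ(g) = ∂g/∂xᵢ + (∑_j s_j·(∂f_j/∂xᵢ)/f_j)·g`, i.e. the natural action of `∂/∂xᵢ`
on `g·f₁^{s₁}⋯f_r^{s_r}`. -/
def BSnabla (F : Fin r → MvPolynomial (Fin n) ℂ) (i : Fin n) :
    Module.End ℂ (BSModule r (∏ k, F k)) :=
  coeffwise _ (BSderiv (∏ k, F k) i)
    + LinearMap.mulLeft ℂ (∑ j, X j * C (BSdlog F i j))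

/-- The algebra `D[s] = D_X[s₁,…,s_r]` of operators on `M`: the subalgebra of
`ℂ`-linear endomorphisms of `M` generated by the multiplication operators by elements of `R`,
the multiplication operators by the variables `s_j`, and the operators `∇ᵢ`.
(As a `ℂ`-subalgebra it is generated by these; as a `ℂ[s₁,…,s_r]`-subalgebra it is generated
by the multiplications by elements of `R` together with the `∇ᵢ`.) -/
def BSDalg (F : Fin r → MvPolynomial (Fin n) ℂ) :
    Subalgebra ℂ (Module.End ℂ (BSModule r (∏ k, F k))) :=
  Algebra.adjoin ℂ
    ((Set.range fun a : MvPolynomial (Fin n) ℂ =>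
        LinearMap.mulLeft ℂ (C (algebraMap _ (Localization.Away (∏ k, F k)) a)))
      ∪ (Set.range fun j : Fin r => LinearMap.mulLeft ℂ (X j : BSModule r (∏ k, F k)))
      ∪ (Set.range fun i : Fin n => BSnabla F i))

/-- The Bernstein–Sato ideal `B_F^m ⊆ ℂ[s₁,…,s_r]` (as a subset): all polynomials `b`
such that `b·1` lies in the `D[s]`-submodule of `M` generated by `f₁^{m₁}⋯f_r^{m_r}`,
encoding the functional equation `b(s)·f₁^{s₁}⋯f_r^{s_r} = P·f₁^{s₁+m₁}⋯f_r^{s_r+m_r}`. -/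
def BSideal (F : Fin r → MvPolynomial (Fin n) ℂ) (m : Fin r → ℕ) :
    Set (MvPolynomial (Fin r) ℂ) :=
  {b | ∃ P ∈ BSDalg F,
    P (C (algebraMap _ (Localization.Away (∏ k, F k)) (∏ j, F j ^ m j)))
      = MvPolynomial.map (algebraMap ℂ (Localization.Away (∏ k, F k))) b}

/-- The zero locus in `ℂ^r` of a set of polynomials in `ℂ[s₁,…,s_r]`. -/
def zeroLoc (B : Set (MvPolynomial (Fin r) ℂ)) : Set (Fin r → ℂ) :=
  {α | ∀ b ∈ B, eval α b = 0}

/-- The map `Exp : ℂ^r → (ℂ^*)^r`, `α ↦ exp(2πiα)` componentwise. -/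
def ExpMap (α : Fin r → ℂ) : Fin r → ℂˣ :=
  fun j => Units.mk0 (Complex.exp (2 * Real.pi * Complex.I * α j)) (Complex.exp_ne_zero _)

end
noncomputable section BSAux
namespace BSAux
open MvPolynomial

variable {n r : ℕ}

/-! ### Basic properties of `BSderiv` -/

lemma BSPhi_fst (f : MvPolynomial (Fin n) ℂ) (i : Fin n) (z : Localization.Away f) :
    (BSPhi f i z).fst = z := by
  have h : (TrivSqZeroExt.fstHom ℂ (Localization.Away f)
        (Localization.Away f)).toRingHom.comp (BSPhi f i) = RingHom.id _ := by
    apply IsLocalization.ringHom_ext (Submonoid.powers f)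
    ext a <;>
      simp only [RingHom.comp_apply, AlgHom.toRingHom_eq_coe, RingHom.coe_coe,
        RingHom.id_apply] <;> rw [BSPhi_algebraMap] <;> rfl
  exact RingHom.congr_fun h z

lemma BSderiv_algebraMap (f : MvPolynomial (Fin n) ℂ) (i : Fin n) (p : MvPolynomial (Fin n) ℂ) :
    BSderiv f i (algebraMap _ _ p) = algebraMap _ _ (pderiv i p) := by
  show (BSPhi f i _).snd = _
  rw [BSPhi_algebraMap]
  rfl

lemma BSderiv_mul (f : MvPolynomial (Fin n) ℂ) (i : Fin n) (x y : Localization.Away f) :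
    BSderiv f i (x * y) = x * BSderiv f i y + y * BSderiv f i x := by
  show (BSPhi f i (x * y)).snd = _
  rw [map_mul, TrivSqZeroExt.snd_mul, BSPhi_fst, BSPhi_fst]
  show x • (BSPhi f i y).snd + (MulOpposite.op y) • (BSPhi f i x).snd = _
  simp only [smul_eq_mul, MulOpposite.smul_eq_mul_unop, MulOpposite.unop_op]
  show x * BSderiv f i y + BSderiv f i x * y = _
  ring

/-! ### Coefficientwise operators -/

lemma coeff_coeffwise (f : MvPolynomial (Fin n) ℂ) (d : Module.End ℂ (Localization.Away f))
    (v : BSModule r f) (m : Fin r →₀ ℕ) :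
    coeff m (coeffwise f d v) = d (coeff m v) := rfl

lemma coeffwise_monomial (f : MvPolynomial (Fin n) ℂ) (d : Module.End ℂ (Localization.Away f))
    (m : Fin r →₀ ℕ) (c : Localization.Away f) :
    coeffwise f d (monomial m c) = monomial m (d c) := by
  ext k
  rw [coeff_coeffwise, coeff_monomial, coeff_monomial]
  split_ifs <;> simp

lemma coeffwise_mul_C (f : MvPolynomial (Fin n) ℂ) (i : Fin n)
    (v : BSModule r f) (g : Localization.Away f) :
    coeffwise f (BSderiv f i) (v * C g)
      = coeffwise f (BSderiv f i) v * C g + v * C (BSderiv f i g) := by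
  ext k
  rw [coeff_coeffwise, coeff_add, mul_comm v (C g), coeff_C_mul,
    mul_comm (coeffwise f (BSderiv f i) v) (C g), coeff_C_mul,
    mul_comm v (C (BSderiv f i g)), coeff_C_mul, coeff_coeffwise, BSderiv_mul]
  ring

lemma d_algC_mul (f : MvPolynomial (Fin n) ℂ) (d : Module.End ℂ (Localization.Away f))
    (e : ℂ) (x : Localization.Away f) :
    d (algebraMap ℂ (Localization.Away f) e * x) = algebraMap ℂ (Localization.Away f) e * d x := by
  rw [← Algebra.smul_def, ← Algebra.smul_def]
  exact d.map_smul e x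

lemma coeffwise_algC_mul (f : MvPolynomial (Fin n) ℂ) (d : Module.End ℂ (Localization.Away f))
    (c : MvPolynomial (Fin r) ℂ) (u : BSModule r f) :
    coeffwise f d (map (algebraMap ℂ (Localization.Away f)) c * u)
      = map (algebraMap ℂ (Localization.Away f)) c * coeffwise f d u := by
  induction c using MvPolynomial.induction_on' with
  | add p q hp hq => simp only [map_add, add_mul, hp, hq]
  | monomial s e =>
    induction u using MvPolynomial.induction_on' with
    | add p q hp hq => simp only [mul_add, map_add, hp, hq]
    | monomial k c =>
      rw [map_monomial, monomial_mul, coeffwise_monomial, coeffwise_monomial, monomial_mul]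
      congr 1
      exact d_algC_mul f d e c

lemma coeffwise_C_mul_map (f : MvPolynomial (Fin n) ℂ) (d : Module.End ℂ (Localization.Away f))
    (c : Localization.Away f) (p : MvPolynomial (Fin r) ℂ) :
    coeffwise f d (C c * map (algebraMap ℂ (Localization.Away f)) p)
      = C (d c) * map (algebraMap ℂ (Localization.Away f)) p := by
  ext k
  rw [coeff_coeffwise, coeff_C_mul, coeff_C_mul, coeff_map, mul_comm c, mul_comm (d c)]
  exact d_algC_mul f d _ c



/-! ### Shift operators -/

/-- Shift `s ↦ s + a` on `ℂ[s]`. -/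
def ShP (a : Fin r → ℕ) : MvPolynomial (Fin r) ℂ →ₐ[ℂ] MvPolynomial (Fin r) ℂ :=
  aeval (fun j => X j + C (a j : ℂ))

/-- Shift `s ↦ s + a` on `M = R_f[s]`. -/
def ShM (f : MvPolynomial (Fin n) ℂ) (a : Fin r → ℕ) :
    BSModule r f →ₐ[Localization.Away f] BSModule r f :=
  aeval (fun j => X j + C ((a j : Localization.Away f)))

lemma ShM_C (f : MvPolynomial (Fin n) ℂ) (a : Fin r → ℕ) (g : Localization.Away f) :
    ShM f a (C g) = C g := by
  have : (C g : BSModule r f) = algebraMap (Localization.Away f) (BSModule r f) g := rfl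
  rw [this, AlgHom.commutes]

lemma ShM_X (f : MvPolynomial (Fin n) ℂ) (a : Fin r → ℕ) (j : Fin r) :
    ShM f a (X j) = X j + C ((a j : Localization.Away f)) := aeval_X _ _

lemma map_ShP (f : MvPolynomial (Fin n) ℂ) (a : Fin r → ℕ) (b : MvPolynomial (Fin r) ℂ) :
    map (algebraMap ℂ (Localization.Away f)) (ShP a b)
      = ShM f a (map (algebraMap ℂ (Localization.Away f)) b) := by
  induction b using MvPolynomial.induction_on with
  | C c =>
    rw [ShP, aeval_C, map_C, ShM_C]
    simp [Algebra.algebraMap_self_apply]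
  | add p q hp hq => simp only [map_add, hp, hq]
  | mul_X p j hp =>
    have h1 : (ShP a) (p * X j) = ShP a p * (X j + C ((a j : ℂ))) := by
      rw [map_mul, ShP, aeval_X]
    have h2 : (map (algebraMap ℂ (Localization.Away f))) (p * X j)
        = map (algebraMap ℂ (Localization.Away f)) p * X j := by rw [map_mul, map_X]
    rw [h1, h2, map_mul, map_mul, ShM_X, hp, map_add, map_X, map_C, map_natCast]

lemma eval_ShP (α : Fin r → ℂ) (a : Fin r → ℕ) (b : MvPolynomial (Fin r) ℂ) :
    eval α (ShP a b) = eval (fun j => α j + (a j : ℂ)) b := by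
  induction b using MvPolynomial.induction_on with
  | C c => simp [ShP]
  | add p q hp hq => simp [hp, hq]
  | mul_X p j hp =>
    have h1 : (ShP a) (p * X j) = ShP a p * (X j + C ((a j : ℂ))) := by
      rw [map_mul, ShP, aeval_X]
    rw [h1, map_mul, hp, map_add, eval_X, eval_C, map_mul, eval_X]

lemma ShM_monomial (f : MvPolynomial (Fin n) ℂ) (a : Fin r → ℕ) (m : Fin r →₀ ℕ)
    (c : Localization.Away f) :
    ShM f a (monomial m c)
      = C c * map (algebraMap ℂ (Localization.Away f))
          (m.prod fun j k => (X j + C ((a j : ℂ))) ^ k) := by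
  rw [ShM, aeval_monomial]
  congr 1
  rw [Finsupp.prod, Finsupp.prod, map_prod]
  refine Finset.prod_congr rfl fun j _ => ?_
  rw [map_pow, map_add, map_X, map_C, map_natCast]
  norm_cast

lemma coeffwise_ShM (f : MvPolynomial (Fin n) ℂ) (d : Module.End ℂ (Localization.Away f))
    (a : Fin r → ℕ) (u : BSModule r f) :
    coeffwise f d (ShM f a u) = ShM f a (coeffwise f d u) := by
  induction u using MvPolynomial.induction_on' with
  | add p q hp hq => simp only [map_add, hp, hq]
  | monomial m c =>
    rw [coeffwise_monomial, ShM_monomial, ShM_monomial, coeffwise_C_mul_map]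
/-! ### The key logarithmic-derivative identity -/

lemma pderiv_finset_prod {ι : Type*} [DecidableEq ι] (i : Fin n) (s : Finset ι)
    (g : ι → MvPolynomial (Fin n) ℂ) :
    pderiv i (∏ j ∈ s, g j) = ∑ j ∈ s, pderiv i (g j) * ∏ k ∈ s.erase j, g k := by
  induction s using Finset.induction_on with
  | empty => simp
  | @insert j s hj ih =>
    rw [Finset.prod_insert hj, pderiv_mul, ih, Finset.sum_insert hj, Finset.erase_insert hj,
      Finset.mul_sum]
    congr 1
    refine Finset.sum_congr rfl fun k hk => ?_
    have hkj : j ≠ k := fun h => hj (h ▸ hk)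
    rw [Finset.erase_insert_of_ne hkj, Finset.prod_insert
      (fun h => hj (Finset.mem_of_mem_erase h))]
    ring

variable (F : Fin r → MvPolynomial (Fin n) ℂ)

lemma key_R_identity (i : Fin n) (a : Fin r → ℕ) :
    pderiv i (∏ j, F j ^ a j) * ∏ k, F k
      = (∑ j, (a j : MvPolynomial (Fin n) ℂ)
          * (pderiv i (F j) * ∏ k ∈ Finset.univ.erase j, F k)) * ∏ l, F l ^ a l := by
  rw [pderiv_finset_prod, Finset.sum_mul, Finset.sum_mul]
  refine Finset.sum_congr rfl fun j _ => ?_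
  rw [pderiv_pow]
  rcases Nat.eq_zero_or_pos (a j) with h | h
  · simp [h]
  · have h1 : ∏ k, F k = F j * ∏ k ∈ Finset.univ.erase j, F k :=
      (Finset.mul_prod_erase _ _ (Finset.mem_univ j)).symm
    have h2 : ∏ l, F l ^ a l = F j ^ a j * ∏ l ∈ Finset.univ.erase j, F l ^ a l :=
      (Finset.mul_prod_erase _ _ (Finset.mem_univ j)).symm
    have h4 : F j ^ (a j - 1) * F j = F j ^ a j := by
      rw [← pow_succ, Nat.sub_add_cancel h]
    rw [h1, h2, ← h4]
    ring

/-- `∑ⱼ aⱼ·(∂fⱼ/∂xᵢ)/fⱼ ∈ R_f`. -/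
def gsum (i : Fin n) (a : Fin r → ℕ) : Localization.Away (∏ k, F k) :=
  ∑ j, ((a j : ℕ) : Localization.Away (∏ k, F k)) * BSdlog F i j

lemma dlog_mul_algebraMap (i : Fin n) (j : Fin r) :
    BSdlog F i j * algebraMap _ (Localization.Away (∏ k, F k)) (∏ k, F k)
      = algebraMap _ _ (pderiv i (F j) * ∏ k ∈ Finset.univ.erase j, F k) := by
  rw [BSdlog, ← Localization.mk_one_eq_algebraMap, ← Localization.mk_one_eq_algebraMap,
    Localization.mk_mul, mul_one, mul_comm, Localization.mk_eq_mk_iff, Localization.r_iff_exists]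
  exact ⟨1, by simp [mul_comm, mul_assoc, mul_left_comm]⟩

lemma key_identity (i : Fin n) (a : Fin r → ℕ) :
    BSderiv (∏ k, F k) i (algebraMap _ _ (∏ j, F j ^ a j))
      = gsum F i a * algebraMap _ _ (∏ j, F j ^ a j) := by
  have hu := IsLocalization.Away.algebraMap_isUnit
    (S := Localization.Away (∏ k, F k)) (∏ k, F k)
  apply hu.mul_left_cancel
  have h1 : gsum F i a * algebraMap _ (Localization.Away (∏ k, F k)) (∏ k, F k)
      = algebraMap _ _ (∑ j, (a j : MvPolynomial (Fin n) ℂ)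
          * (pderiv i (F j) * ∏ k ∈ Finset.univ.erase j, F k)) := by
    rw [gsum, Finset.sum_mul, map_sum]
    refine Finset.sum_congr rfl fun j _ => ?_
    rw [mul_assoc, dlog_mul_algebraMap]
    simp only [map_mul, map_natCast]
  rw [BSderiv_algebraMap,
    show algebraMap _ (Localization.Away (∏ k, F k)) (∏ k, F k)
        * (gsum F i a * algebraMap _ _ (∏ j, F j ^ a j))
      = (gsum F i a * algebraMap _ _ (∏ k, F k)) * algebraMap _ _ (∏ j, F j ^ a j) from by ring,
    h1, ← map_mul, ← map_mul]
  exact congrArg _ (by rw [mul_comm]; exact key_R_identity F i a)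
/-! ### The twist operator `T_a : u ↦ σ_a(u)·f^a` and commutation with `D[s]` -/

/-- The operator `u ↦ σ_a(u)·f^a` on `M`. -/
def Tmap (F : Fin r → MvPolynomial (Fin n) ℂ) (a : Fin r → ℕ) :
    BSModule r (∏ k, F k) →ₗ[ℂ] BSModule r (∏ k, F k) where
  toFun u := ShM (∏ k, F k) a u * C (algebraMap _ _ (∏ j, F j ^ a j))
  map_add' u v := by
    show ShM (∏ k, F k) a (u + v) * _ = _
    rw [map_add, add_mul]
  map_smul' c u := by
    show ShM (∏ k, F k) a (c • u) * _ = c • (ShM (∏ k, F k) a u * _)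
    simp only [Algebra.smul_def, map_mul]
    rw [IsScalarTower.algebraMap_apply ℂ (Localization.Away (∏ k, F k))
      (BSModule r (∏ k, F k)), AlgHom.commutes, mul_assoc,
      ← IsScalarTower.algebraMap_apply ℂ (Localization.Away (∏ k, F k))]

lemma Tmap_apply (a : Fin r → ℕ) (u : BSModule r (∏ k, F k)) :
    Tmap F a u = ShM (∏ k, F k) a u * C (algebraMap _ _ (∏ j, F j ^ a j)) := rfl

lemma mem_D_const (h : MvPolynomial (Fin n) ℂ) :
    LinearMap.mulLeft ℂ (C (algebraMap _ (Localization.Away (∏ k, F k)) h)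
      : BSModule r (∏ k, F k)) ∈ BSDalg F :=
  Algebra.subset_adjoin (Or.inl (Or.inl ⟨h, rfl⟩))

lemma mem_D_X (j : Fin r) :
    LinearMap.mulLeft ℂ (X j : BSModule r (∏ k, F k)) ∈ BSDalg F :=
  Algebra.subset_adjoin (Or.inl (Or.inr ⟨j, rfl⟩))

lemma mem_D_nabla (i : Fin n) : BSnabla F i ∈ BSDalg F :=
  Algebra.subset_adjoin (Or.inr ⟨i, rfl⟩)

/-- Every operator in `D[s]` is `ℂ[s]`-linear. -/
lemma D_comm_mapC {P : Module.End ℂ (BSModule r (∏ k, F k))} (hP : P ∈ BSDalg F)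
    (c : MvPolynomial (Fin r) ℂ) (u : BSModule r (∏ k, F k)) :
    P (map (algebraMap ℂ (Localization.Away (∏ k, F k))) c * u)
      = map (algebraMap ℂ (Localization.Away (∏ k, F k))) c * P u := by
  induction hP using Algebra.adjoin_induction generalizing u with
  | mem Q hQ =>
    rcases hQ with (⟨h, rfl⟩ | ⟨j, rfl⟩) | ⟨i, rfl⟩
    · simp only [LinearMap.mulLeft_apply]; ring
    · simp only [LinearMap.mulLeft_apply]; ring
    · simp only [BSnabla, LinearMap.add_apply, LinearMap.mulLeft_apply]
      rw [coeffwise_algC_mul]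
      ring
  | algebraMap c' =>
    simp only [Module.algebraMap_end_apply]
    rw [mul_smul_comm]
  | add P1 P2 h1 h2 ih1 ih2 => simp only [LinearMap.add_apply, ih1, ih2, mul_add]
  | mul P1 P2 h1 h2 ih1 ih2 => simp only [Module.End.mul_apply, ih1, ih2]

/-- The twist operator intertwines `D[s]` with itself. -/
lemma D_comm_T (a : Fin r → ℕ) {P : Module.End ℂ (BSModule r (∏ k, F k))} (hP : P ∈ BSDalg F) :
    ∃ Q ∈ BSDalg F, ∀ u, Q (Tmap F a u) = Tmap F a (P u) := by
  induction hP using Algebra.adjoin_induction with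
  | mem Q hQ =>
    rcases hQ with (⟨h, rfl⟩ | ⟨j, rfl⟩) | ⟨i, rfl⟩
    · refine ⟨_, mem_D_const F h, fun u => ?_⟩
      rw [LinearMap.mulLeft_apply, Tmap_apply, Tmap_apply, LinearMap.mulLeft_apply,
        map_mul, ShM_C]
      ring
    · refine ⟨LinearMap.mulLeft ℂ (X j) + ((a j : ℕ) : Module.End ℂ (BSModule r (∏ k, F k))),
        Subalgebra.add_mem _ (mem_D_X F j) (Subalgebra.natCast_mem _ _), fun u => ?_⟩
      rw [LinearMap.add_apply, LinearMap.mulLeft_apply, Module.End.natCast_apply,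
        Tmap_apply, Tmap_apply, LinearMap.mulLeft_apply, map_mul, ShM_X, nsmul_eq_mul,
        map_natCast (C : Localization.Away (∏ k, F k) →+* BSModule r (∏ k, F k)) (a j)]
      ring
    · refine ⟨BSnabla F i, mem_D_nabla F i, fun u => ?_⟩
      simp only [BSnabla, LinearMap.add_apply, LinearMap.mulLeft_apply, Tmap_apply]
      have hSL : ShM (∏ k, F k) a (∑ j, X j * C (BSdlog F i j))
          = (∑ j, X j * C (BSdlog F i j)) + C (gsum F i a) := by
        rw [map_sum, gsum, map_sum, ← Finset.sum_add_distrib]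
        refine Finset.sum_congr rfl fun j _ => ?_
        rw [map_mul, ShM_X, ShM_C, map_mul]
        ring
      have h2 : (C (BSderiv (∏ k, F k) i (algebraMap _ _ (∏ j, F j ^ a j)))
            : BSModule r (∏ k, F k))
          = C (gsum F i a) * C (algebraMap _ _ (∏ j, F j ^ a j)) := by
        rw [key_identity F i a, map_mul]
      have h3 : ShM (∏ k, F k) a (coeffwise _ (BSderiv _ i) u
            + (∑ j, X j * C (BSdlog F i j)) * u)
          = coeffwise _ (BSderiv _ i) (ShM (∏ k, F k) a u)
            + ((∑ j, X j * C (BSdlog F i j)) + C (gsum F i a))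
                * ShM (∏ k, F k) a u := by
        rw [map_add, map_mul, hSL, coeffwise_ShM]
      rw [coeffwise_mul_C, h2, h3]
      ring
  | algebraMap c =>
    exact ⟨algebraMap ℂ _ c, Subalgebra.algebraMap_mem _ c, fun u => by
      simp only [Module.algebraMap_end_apply, map_smul]⟩
  | add P1 P2 h1 h2 ih1 ih2 =>
    obtain ⟨Q1, hQ1, e1⟩ := ih1
    obtain ⟨Q2, hQ2, e2⟩ := ih2
    exact ⟨Q1 + Q2, Subalgebra.add_mem _ hQ1 hQ2, fun u => by
      simp only [LinearMap.add_apply, e1, e2, map_add]⟩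
  | mul P1 P2 h1 h2 ih1 ih2 =>
    obtain ⟨Q1, hQ1, e1⟩ := ih1
    obtain ⟨Q2, hQ2, e2⟩ := ih2
    exact ⟨Q1 * Q2, Subalgebra.mul_mem _ hQ1 hQ2, fun u => by
      rw [Module.End.mul_apply, e2, e1, Module.End.mul_apply]⟩
/-! ### Bernstein–Sato ideal manipulations -/

lemma prod_pow_single (i : Fin r) :
    (∏ j, F j ^ (Pi.single i 1 : Fin r → ℕ) j) = F i := by
  rw [Finset.prod_eq_single i (fun j _ hj => by rw [Pi.single_eq_of_ne hj, pow_zero])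
    (fun h => absurd (Finset.mem_univ i) h), Pi.single_eq_same, pow_one]

lemma one_mem_zero (a : Fin r → ℕ) (h : ∀ j, a j = 0) :
    (1 : MvPolynomial (Fin r) ℂ) ∈ BSideal F a := by
  refine ⟨1, Subalgebra.one_mem _, ?_⟩
  rw [show (∏ j, F j ^ a j) = 1 from Finset.prod_eq_one fun j _ => by rw [h j, pow_zero]]
  simp

lemma one_mem_single (i : Fin r) (cc : ℂ) (hcc : F i = C cc) (hcc0 : cc ≠ 0) :
    (1 : MvPolynomial (Fin r) ℂ) ∈ BSideal F (Pi.single i 1) := by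
  refine ⟨LinearMap.mulLeft ℂ
    (C (algebraMap _ (Localization.Away (∏ k, F k)) (C cc⁻¹))), mem_D_const F _, ?_⟩
  rw [LinearMap.mulLeft_apply, ← map_mul, ← map_mul, prod_pow_single F i, hcc, ← map_mul,
    inv_mul_cancel₀ hcc0]
  simp

lemma mem_mono (i : Fin r) (him : 1 ≤ m i) {b : MvPolynomial (Fin r) ℂ}
    (hb : b ∈ BSideal F m) : b ∈ BSideal F (Pi.single i 1) := by
  obtain ⟨P, hP, hPe⟩ := hb
  refine ⟨P * LinearMap.mulLeft ℂ
    (C (algebraMap _ _ (∏ j, F j ^ (m j - (Pi.single i 1 : Fin r → ℕ) j)))),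
    Subalgebra.mul_mem _ hP (mem_D_const F _), ?_⟩
  rw [Module.End.mul_apply, LinearMap.mulLeft_apply, ← map_mul, ← map_mul]
  have hprod : (∏ j, F j ^ (m j - (Pi.single i 1 : Fin r → ℕ) j))
      * (∏ j, F j ^ (Pi.single i 1 : Fin r → ℕ) j) = ∏ j, F j ^ m j := by
    rw [← Finset.prod_mul_distrib]
    refine Finset.prod_congr rfl fun j _ => ?_
    rw [← pow_add]
    congr 1
    rcases eq_or_ne j i with rfl | hne
    · rw [Pi.single_eq_same]; omega
    · rw [Pi.single_eq_of_ne hne]; omega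
  rw [hprod, hPe]

lemma mem_shift (a : Fin r → ℕ) (i : Fin r) {b' c : MvPolynomial (Fin r) ℂ}
    (hb' : b' ∈ BSideal F a) (hc : c ∈ BSideal F (Pi.single i 1)) :
    ShP a c * b' ∈ BSideal F (fun j => a j + (Pi.single i 1 : Fin r → ℕ) j) := by
  obtain ⟨P, hP, hPe⟩ := hb'
  obtain ⟨Q, hQ, hQe⟩ := hc
  obtain ⟨Q', hQ', hQ'e⟩ := D_comm_T F a hQ
  refine ⟨P * Q', Subalgebra.mul_mem _ hP hQ', ?_⟩
  have key : (C (algebraMap _ (Localization.Away (∏ k, F k))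
        (∏ j, F j ^ (a j + (Pi.single i 1 : Fin r → ℕ) j))) : BSModule r (∏ k, F k))
      = Tmap F a (C (algebraMap _ _ (∏ j, F j ^ (Pi.single i 1 : Fin r → ℕ) j))) := by
    have hp : (∏ j, F j ^ (Pi.single i 1 : Fin r → ℕ) j) * (∏ j, F j ^ a j)
        = ∏ j, F j ^ (a j + (Pi.single i 1 : Fin r → ℕ) j) := by
      rw [← Finset.prod_mul_distrib]
      exact Finset.prod_congr rfl fun j _ => by rw [← pow_add, Nat.add_comm]
    rw [Tmap_apply, ShM_C, ← map_mul, ← map_mul, hp]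
  rw [Module.End.mul_apply, key, hQ'e, hQe, Tmap_apply, ← map_ShP, D_comm_mapC F hP, hPe,
    ← map_mul]

lemma ExpMap_add_nat (α : Fin r → ℂ) (k : Fin r → ℕ) :
    ExpMap (fun j => α j + ((k j : ℕ) : ℂ)) = ExpMap α := by
  funext j
  refine Units.ext ?_
  show Complex.exp (2 * Real.pi * Complex.I * (α j + ((k j : ℕ) : ℂ)))
    = Complex.exp (2 * Real.pi * Complex.I * α j)
  rw [mul_add, Complex.exp_add]
  have h : (2 * (Real.pi : ℂ) * Complex.I * ((k j : ℕ) : ℂ))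
      = ((k j : ℤ) : ℂ) * (2 * (Real.pi : ℂ) * Complex.I) := by push_cast; ring
  rw [h, Complex.exp_int_mul_two_pi_mul_I, mul_one]
end BSAux
end BSAux


open MvPolynomial in
/-- **(Budur.)** For `m ∈ ℕ^r` with `f₁^{m₁}⋯f_r^{m_r}` nonconstant,
`Exp(Z(B_F^m)) = ⋃ᵢ Exp(Z(B_F^{eᵢ}))`, the union over all `i` with `mᵢ ≠ 0` and `fᵢ`
nonconstant, where `eᵢ` is the `i`-th standard basis vector of `ℕ^r`. -/
theorem exp_zero_locus_eq_union_over_standard_basis_vectors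
    {n r : ℕ} (hn : 1 ≤ n) (hr : 1 ≤ r)
    (F : Fin r → MvPolynomial (Fin n) ℂ) (hF : ∀ j, F j ≠ 0)
    (m : Fin r → ℕ) (hm : ∀ c : ℂ, ∏ j, F j ^ m j ≠ C c) :
    ExpMap '' zeroLoc (BSideal F m)
      = ⋃ i ∈ {i : Fin r | m i ≠ 0 ∧ ∀ c : ℂ, F i ≠ C c},
          ExpMap '' zeroLoc (BSideal F (Pi.single i 1)) := by
  apply Set.Subset.antisymm
  · rintro _ ⟨α, hα, rfl⟩
    by_contra hcon
    have AUX : ∀ N : ℕ, ∀ a : Fin r → ℕ, (∑ j, a j) = N → (∀ j, a j ≤ m j) →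
        ∃ b ∈ BSideal F a, eval α b ≠ 0 := by
      intro N
      induction N with
      | zero =>
        intro a ha _
        have h0 : ∀ j, a j = 0 := fun j =>
          (Finset.sum_eq_zero_iff.mp ha) j (Finset.mem_univ j)
        exact ⟨1, BSAux.one_mem_zero F a h0, by simp⟩
      | succ N ih =>
        intro a ha hle
        have hex : ∃ i, a i ≠ 0 := by
          by_contra h
          push_neg at h
          simp [h] at ha
        obtain ⟨i, hi⟩ := hex
        set a' := Function.update a i (a i - 1) with ha'
        have hsum' : (∑ j, a' j) = N := by
          have h1 : (∑ j, a' j) + 1 = ∑ j, a j := by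
            rw [ha', Finset.sum_update_of_mem (Finset.mem_univ i),
              show (∑ j, a j) = a i + ∑ j ∈ Finset.univ.erase i, a j from
                (Finset.add_sum_erase _ _ (Finset.mem_univ i)).symm, Finset.erase_eq]
            omega
          omega
        have hle' : ∀ j, a' j ≤ m j := by
          intro j
          rcases eq_or_ne j i with rfl | hne
          · rw [ha', Function.update_self]; exact le_trans (Nat.sub_le _ _) (hle j)
          · rw [ha', Function.update_of_ne hne]; exact hle j
        obtain ⟨b', hb', hb'0⟩ := ih a' hsum' hle'
        have hstep : ∃ c ∈ BSideal F (Pi.single i 1),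
            eval (fun j => α j + ((a' j : ℕ) : ℂ)) c ≠ 0 := by
          by_cases hconst : ∀ cc : ℂ, F i ≠ C cc
          · have hmi : m i ≠ 0 := by have := hle i; omega
            have hnz : (fun j => α j + ((a' j : ℕ) : ℂ))
                ∉ zeroLoc (BSideal F (Pi.single i 1)) := by
              intro hz
              exact hcon (Set.mem_biUnion
                (show i ∈ {i : Fin r | m i ≠ 0 ∧ ∀ c : ℂ, F i ≠ C c} from ⟨hmi, hconst⟩)
                ⟨_, hz, BSAux.ExpMap_add_nat α a'⟩)
            simp only [zeroLoc, Set.mem_setOf_eq] at hnz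
            push_neg at hnz
            obtain ⟨c, hc1, hc2⟩ := hnz
            exact ⟨c, hc1, hc2⟩
          · push_neg at hconst
            obtain ⟨cc, hcc⟩ := hconst
            have hcc0 : cc ≠ 0 := fun h => hF i (by rw [hcc, h, map_zero])
            exact ⟨1, BSAux.one_mem_single F i cc hcc hcc0, by simp⟩
        obtain ⟨c, hcmem, hc0⟩ := hstep
        refine ⟨BSAux.ShP a' c * b', ?_, ?_⟩
        · have hmm := BSAux.mem_shift F a' i hb' hcmem
          have haa : a = fun j => a' j + (Pi.single i 1 : Fin r → ℕ) j := by
            funext j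
            rcases eq_or_ne j i with rfl | hne
            · rw [ha', Function.update_self, Pi.single_eq_same]; omega
            · rw [ha', Function.update_of_ne hne, Pi.single_eq_of_ne hne]; omega
          rw [haa]
          exact hmm
        · rw [map_mul, BSAux.eval_ShP]
          exact mul_ne_zero hc0 hb'0
    obtain ⟨b, hbmem, hb0⟩ := AUX (∑ j, m j) m rfl fun j => le_refl _
    exact hb0 (hα b hbmem)
  · intro x hx
    obtain ⟨i, hi, hx⟩ := Set.mem_iUnion₂.mp hx
    obtain ⟨α, hα, rfl⟩ := hx
    refine ⟨α, ?_, rfl⟩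
    intro b hb
    exact hα b (BSAux.mem_mono F i (Nat.one_le_iff_ne_zero.mpr hi.1) hb)
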